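/- Let α ∈ (1/2,1), T > 0, x₀ ∈ ℝ^d, and let b : ℝ^d → ℝ^d be globally Lipschitz and continuously differentiable with derivative of at most polynomial growth. Suppose x : [0,T] → ℝ^d is continuous and satisfies the deterministic Volterra equation x(t) = x₀ + ∫_0^t K(t−s) b(x(s)) ds for all t ∈ [0,T]. Then the function t ↦ x(t) has bounded variation on [0,T]. -/

import Mathlib

open MeasureTheory intervalIntegral Real Set

/-- Fractional kernel `K(u) = u^(α-1)/Γ(α)` for `u > 0`, `0` otherwise. -/
noncomputable def Kker (α u : ℝ) : ℝ := if 0 < u then u ^ (α - 1) / Real.Gamma α else 0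

/-- First-order resolvent kernel `L(u) = u^(-α)/Γ(1-α)` for `u > 0`, `0` otherwise. -/
noncomputable def Lker (α u : ℝ) : ℝ := if 0 < u then u ^ (-α) / Real.Gamma (1 - α) else 0

/-- Discretization map `φ_h(t) = h⌊t/h⌋`. -/
noncomputable def phi (h t : ℝ) : ℝ := h * (⌊t / h⌋ : ℝ)

/-- `χ_h(u) = u - φ_h(u)`. -/
noncomputable def chi (h u : ℝ) : ℝ := u - phi h u

/-- Discretized kernel `K^{(h)}`. -/
noncomputable def Kh (α h t s : ℝ) : ℝ :=
  if 0 ≤ s ∧ s < phi h t then Kker α (phi h t - s) else 0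

/-- The kernel `g^{(h)}(t,s) = ∫_s^t L(t-v) K^{(h)}(v,s) dv`. -/
noncomputable def gh (α h t s : ℝ) : ℝ := ∫ v in s..t, Lker α (t - v) * Kh α h v s


section aux

variable {α : ℝ}

lemma Kker_nonneg (hα : 0 < α) (u : ℝ) : 0 ≤ Kker α u := by
  unfold Kker
  split
  · exact div_nonneg (Real.rpow_nonneg (by linarith) _) (Real.Gamma_pos_of_pos hα).le
  · exact le_rfl

lemma Kker_of_nonneg (hα1 : α < 1) {u : ℝ} (hu : 0 ≤ u) :
    Kker α u = u ^ (α - 1) / Real.Gamma α := by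
  unfold Kker
  rcases hu.lt_or_eq with h | h
  · rw [if_pos h]
  · rw [← h, if_neg (lt_irrefl 0), Real.zero_rpow (by intro hc; linarith [sub_eq_zero.mp hc]),
      zero_div]

lemma II_rpow_sub {r : ℝ} (hr : -1 < r) (a c e : ℝ) :
    IntervalIntegrable (fun u => (e - u) ^ r) volume a c := by
  have h := (intervalIntegrable_rpow' (a := e - a) (b := e - c) hr).comp_sub_left e
  simpa using h

lemma integral_rpow_sub {r : ℝ} (hr : -1 < r) {a c e : ℝ} :
    ∫ u in a..c, (e - u) ^ r = ((e - a) ^ (r + 1) - (e - c) ^ (r + 1)) / (r + 1) := by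
  rw [integral_comp_sub_left (fun v => v ^ r) e, integral_rpow (Or.inl hr)]

lemma intervalIntegrable_Kker_sub (hα0 : 0 < α) (hα1 : α < 1) {a c e : ℝ}
    (hac : a ≤ c) (hce : c ≤ e) :
    IntervalIntegrable (fun u => Kker α (e - u)) volume a c := by
  have h := (II_rpow_sub (r := α - 1) (by linarith) a c e).div_const (Real.Gamma α)
  rw [intervalIntegrable_iff_integrableOn_Ioc_of_le hac] at h ⊢
  refine h.congr_fun ?_ measurableSet_Ioc
  intro u hu
  exact (Kker_of_nonneg hα1 (by have := hu.2; simp only [Set.mem_Ioc] at hu; linarith [hu.2])).symm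

lemma integral_Kker_sub (hα0 : 0 < α) (hα1 : α < 1) {a c e : ℝ} (hac : a ≤ c) (hce : c ≤ e) :
    ∫ u in a..c, Kker α (e - u) = ((e - a) ^ α - (e - c) ^ α) / (α * Real.Gamma α) := by
  rw [intervalIntegral.integral_congr (g := fun u => (e - u) ^ (α - 1) / Real.Gamma α) ?_]
  · rw [intervalIntegral.integral_div, integral_rpow_sub (by linarith)]
    have h1 : α - 1 + 1 = α := by ring
    rw [h1, div_div]
  · intro u hu
    rw [Set.uIcc_of_le hac] at hu
    exact Kker_of_nonneg hα1 (by linarith [hu.2])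

lemma norm_intIntegral_le {E : Type*} [NormedAddCommGroup E] [NormedSpace ℝ E]
    {f : ℝ → E} {g : ℝ → ℝ} {a b : ℝ} (hab : a ≤ b)
    (h : ∀ᵐ t ∂(volume.restrict (Set.Ioc a b)), ‖f t‖ ≤ g t)
    (hg : IntervalIntegrable g volume a b) :
    ‖∫ t in a..b, f t‖ ≤ ∫ t in a..b, g t := by
  have h' : ∀ᵐ t ∂(volume.restrict (Set.uIoc a b)), ‖f t‖ ≤ g t := by rwa [uIoc_of_le hab]
  have habs := intervalIntegral.norm_integral_le_abs_of_norm_le h' hg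
  have h0 : 0 ≤ ∫ t in a..b, g t := by
    apply intervalIntegral.integral_nonneg_of_ae_restrict hab
    have h2 : ∀ᵐ t ∂(volume.restrict (Set.Icc a b)), ‖f t‖ ≤ g t :=
      (ae_restrict_congr_set Ioc_ae_eq_Icc).mp h
    exact h2.mono fun t ht => (norm_nonneg _).trans ht
  rwa [abs_of_nonneg h0] at habs

lemma alg1 {C G w sP TP D : ℝ} (hG : 0 < G) (hw : 0 < w) (hC : 0 ≤ C) (hD : 0 ≤ D)
    (hsP : sP ≤ TP) : (C * D / G) * (sP / w) ≤ (C * TP / (w * G)) * D := by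
  rw [div_mul_div_comm, div_mul_eq_mul_div, mul_comm G w]
  refine (div_le_div_iff_of_pos_right (mul_pos hw hG)).mpr ?_
  nlinarith [mul_le_mul_of_nonneg_left hsP (mul_nonneg hC hD)]

end aux

set_option maxHeartbeats 3200000 in
/-- the solution of the deterministic Volterra equation has bounded
variation on `[0,T]` (Lemma 5.2). -/
theorem deterministic_volterra_boundedVariation (α T : ℝ)
    (hα : α ∈ Set.Ioo (1/2 : ℝ) 1) (hT : 0 < T)
    (d : ℕ) (x₀ : EuclideanSpace ℝ (Fin d))
    (b : EuclideanSpace ℝ (Fin d) → EuclideanSpace ℝ (Fin d))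
    (hbLip : ∃ Lip : ℝ, ∀ y z, ‖b y - b z‖ ≤ Lip * ‖y - z‖)
    (hbC1 : ContDiff ℝ 1 b)
    (hbDer : ∃ c > 0, ∀ y, ‖fderiv ℝ b y‖ ≤ c * (1 + ‖y‖ ^ c))
    (x : ℝ → EuclideanSpace ℝ (Fin d)) (hx : ContinuousOn x (Set.Icc 0 T))
    (heq : ∀ t ∈ Set.Icc (0:ℝ) T,
      x t = x₀ + ∫ s in (0:ℝ)..t, Kker α (t - s) • b (x s)) :
    BoundedVariationOn x (Set.Icc 0 T) := by
  obtain ⟨hα2, hα1⟩ := hα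
  have hα0 : (0:ℝ) < α := by linarith
  have hΓ : 0 < Real.Gamma α := Real.Gamma_pos_of_pos hα0
  set f : ℝ → EuclideanSpace ℝ (Fin d) := fun u => b (x u) with hfdef
  have hfc : ContinuousOn f (Icc 0 T) := hbC1.continuous.comp_continuousOn hx
  obtain ⟨M₀, hM₀⟩ := isCompact_Icc.exists_bound_of_continuousOn hfc
  set M := max M₀ 0 with hMdef
  have hM : ∀ u ∈ Icc (0:ℝ) T, ‖f u‖ ≤ M := fun u hu => (hM₀ u hu).trans (le_max_left _ _)
  have hM0 : (0:ℝ) ≤ M := le_max_right _ _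
  obtain ⟨L₀, hL₀⟩ := hbLip
  have hL : ∀ y z, ‖b y - b z‖ ≤ |L₀| * ‖y - z‖ := fun y z =>
    (hL₀ y z).trans (mul_le_mul_of_nonneg_right (le_abs_self _) (norm_nonneg _))
  set L := |L₀| with hLdef
  have hL0 : (0:ℝ) ≤ L := abs_nonneg _
  -- integrability of the main integrand
  have hKfi : ∀ a c e : ℝ, 0 ≤ a → a ≤ c → c ≤ e → e ≤ T →
      IntervalIntegrable (fun u => Kker α (e - u) • f u) volume a c := by
    intro a c e ha hac hce heT
    rw [intervalIntegrable_iff_integrableOn_Ioc_of_le hac]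
    have hK : IntegrableOn (fun u => Kker α (e - u)) (Ioc a c) := by
      have h := intervalIntegrable_Kker_sub hα0 hα1 hac hce
      rwa [intervalIntegrable_iff_integrableOn_Ioc_of_le hac] at h
    have hKM : IntegrableOn (fun u => Kker α (e - u) * M) (Ioc a c) := hK.mul_const M
    refine Integrable.mono' hKM ?_ ?_
    · exact hK.aestronglyMeasurable.smul
        ((hfc.mono (fun u hu => ⟨by have := hu.1; linarith, le_trans hu.2 (le_trans hce heT)⟩)).aestronglyMeasurable
          measurableSet_Ioc)
    · filter_upwards [ae_restrict_mem measurableSet_Ioc] with u hu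
      rw [norm_smul, Real.norm_eq_abs, abs_of_nonneg (Kker_nonneg hα0 _)]
      exact mul_le_mul_of_nonneg_left
        (hM u ⟨by have := hu.1; linarith, le_trans hu.2 (le_trans hce heT)⟩)
        (Kker_nonneg hα0 _)
  -- splitting of increments
  have hsplit : ∀ s t : ℝ, 0 ≤ s → s ≤ t → t ≤ T →
      x t - x s = (∫ u in (0:ℝ)..s, (Kker α (t - u) - Kker α (s - u)) • f u)
        + ∫ u in s..t, Kker α (t - u) • f u := by
    intro s t hs hst htT
    have h1 := hKfi 0 s t le_rfl hs (by linarith) htT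
    have h2 := hKfi s t t hs hst le_rfl htT
    have h3 := hKfi 0 s s le_rfl hs le_rfl (by linarith)
    have hsum := intervalIntegral.integral_add_adjacent_intervals h1 h2
    rw [heq t ⟨by linarith, htT⟩, heq s ⟨hs, by linarith⟩]
    simp only [sub_smul]
    rw [intervalIntegral.integral_sub h1 h3, ← hsum]
    abel
  -- Hölder continuity of x
  have hHolder : ∀ s t : ℝ, 0 ≤ s → s ≤ t → t ≤ T →
      ‖x t - x s‖ ≤ 2 * M / (α * Real.Gamma α) * (t - s) ^ α := by
    intro s t hs hst htT
    rw [hsplit s t hs hst htT]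
    have hK1 : IntervalIntegrable (fun u => Kker α (t - u)) volume 0 s :=
      intervalIntegrable_Kker_sub hα0 hα1 hs (by linarith)
    have hK2 : IntervalIntegrable (fun u => Kker α (s - u)) volume 0 s :=
      intervalIntegrable_Kker_sub hα0 hα1 hs le_rfl
    have hK3 : IntervalIntegrable (fun u => Kker α (t - u)) volume s t :=
      intervalIntegrable_Kker_sub hα0 hα1 hst le_rfl
    have hrestr : volume.restrict (Set.uIoc (0:ℝ) s) = volume.restrict (Ioo 0 s) := by
      rw [uIoc_of_le hs]
      exact (Measure.restrict_congr_set Ioo_ae_eq_Ioc).symm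
    have hA : ‖∫ u in (0:ℝ)..s, (Kker α (t - u) - Kker α (s - u)) • f u‖
        ≤ ∫ u in (0:ℝ)..s, (Kker α (s - u) - Kker α (t - u)) * M := by
      refine norm_intIntegral_le hs ?_ ((hK2.sub hK1).mul_const M)
      rw [(Measure.restrict_congr_set Ioo_ae_eq_Ioc).symm]
      filter_upwards [ae_restrict_mem measurableSet_Ioo] with u hu
      obtain ⟨hu0, hus⟩ := hu
      have hsu : (0:ℝ) < s - u := by linarith
      have htu : (0:ℝ) < t - u := by linarith
      have hle : Kker α (t - u) ≤ Kker α (s - u) := by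
        rw [Kker_of_nonneg hα1 hsu.le, Kker_of_nonneg hα1 htu.le]
        exact (div_le_div_iff_of_pos_right hΓ).mpr
          (Real.rpow_le_rpow_of_nonpos hsu (by linarith) (by linarith))
      rw [norm_smul, Real.norm_eq_abs, abs_of_nonpos (by linarith), neg_sub]
      exact mul_le_mul_of_nonneg_left
        (hM u ⟨hu0.le, by linarith⟩) (by linarith)
    have hB : ‖∫ u in s..t, Kker α (t - u) • f u‖
        ≤ ∫ u in s..t, Kker α (t - u) * M := by
      refine norm_intIntegral_le hst ?_ (hK3.mul_const M)
      filter_upwards [ae_restrict_mem measurableSet_Ioc] with u hu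
      rw [norm_smul, Real.norm_eq_abs, abs_of_nonneg (Kker_nonneg hα0 _)]
      exact mul_le_mul_of_nonneg_left
        (hM u ⟨by have := hu.1; linarith, by linarith [hu.2]⟩) (Kker_nonneg hα0 _)
    have eA : ∫ u in (0:ℝ)..s, (Kker α (s - u) - Kker α (t - u)) * M
        = ((s ^ α - 0 ^ α) - ((t ^ α - (t - s) ^ α))) / (α * Real.Gamma α) * M := by
      rw [intervalIntegral.integral_mul_const, intervalIntegral.integral_sub hK2 hK1,
        integral_Kker_sub hα0 hα1 hs le_rfl, integral_Kker_sub hα0 hα1 hs (by linarith)]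
      rw [sub_zero, sub_self, sub_div]
      ring_nf
    have eB : ∫ u in s..t, Kker α (t - u) * M = ((t - s) ^ α - 0 ^ α) / (α * Real.Gamma α) * M := by
      rw [intervalIntegral.integral_mul_const, integral_Kker_sub hα0 hα1 hst le_rfl, sub_self]
    have hz : (0:ℝ) ^ α = 0 := Real.zero_rpow hα0.ne'
    have hsα : s ^ α ≤ t ^ α := Real.rpow_le_rpow hs hst hα0.le
    have hαΓ : 0 < α * Real.Gamma α := mul_pos hα0 hΓ
    calc ‖(∫ u in (0:ℝ)..s, (Kker α (t - u) - Kker α (s - u)) • f u)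
          + ∫ u in s..t, Kker α (t - u) • f u‖
        ≤ ‖∫ u in (0:ℝ)..s, (Kker α (t - u) - Kker α (s - u)) • f u‖
          + ‖∫ u in s..t, Kker α (t - u) • f u‖ := norm_add_le _ _
      _ ≤ ((s ^ α - 0 ^ α) - ((t ^ α - (t - s) ^ α))) / (α * Real.Gamma α) * M
          + ((t - s) ^ α - 0 ^ α) / (α * Real.Gamma α) * M := by
          rw [← eA, ← eB]; exact add_le_add hA hB
      _ ≤ (t - s) ^ α / (α * Real.Gamma α) * M + (t - s) ^ α / (α * Real.Gamma α) * M := by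
          simp only [hz, sub_zero]
          exact add_le_add
            (mul_le_mul_of_nonneg_right ((div_le_div_iff_of_pos_right hαΓ).mpr (by linarith)) hM0) le_rfl
      _ = 2 * M / (α * Real.Gamma α) * (t - s) ^ α := by ring
  -- Hölder continuity of f ∘ x
  set C₁ := L * (2 * M / (α * Real.Gamma α)) with hC₁def
  have hC₁0 : 0 ≤ C₁ := mul_nonneg hL0 (by positivity)
  have hfH : ∀ s u : ℝ, 0 ≤ s → s ≤ u → u ≤ T → ‖f u - f s‖ ≤ C₁ * (u - s) ^ α := by
    intro s u hs hsu huT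
    refine (hL _ _).trans ?_
    rw [hC₁def, mul_assoc]
    exact mul_le_mul_of_nonneg_left (hHolder s u hs hsu huT) hL0
  -- the key pointwise kernel estimate
  have hkey : ∀ w Δ : ℝ, 0 < w → 0 ≤ Δ →
      w ^ (α - 1) - (w + Δ) ^ (α - 1) ≤ (1 - α) * Δ * w ^ (α - 2) := by
    intro w Δ hw hΔ
    have h0 : (0:ℝ) ∉ Set.uIcc w (w + Δ) := by
      rw [Set.uIcc_of_le (by linarith)]
      intro h
      exact absurd h.1 (by linarith)
    have hint : ∫ z in w..(w + Δ), z ^ (α - 2)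
        = ((w + Δ) ^ (α - 1) - w ^ (α - 1)) / (α - 1) := by
      rw [integral_rpow (Or.inr ⟨by intro h; rw [sub_eq_iff_eq_add] at h; norm_num at h; linarith, h0⟩)]
      have h2 : α - 2 + 1 = α - 1 := by ring
      rw [h2]
    have hci : IntervalIntegrable (fun z : ℝ => z ^ (α - 2)) volume w (w + Δ) := by
      apply ContinuousOn.intervalIntegrable
      apply ContinuousOn.rpow_const continuousOn_id
      intro z hz
      rw [Set.uIcc_of_le (by linarith)] at hz
      refine Or.inl fun h => ?_
      simp only [id_eq] at h
      rw [h] at hz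
      exact absurd hz.1 (by linarith)
    have hmono : ∫ z in w..(w + Δ), z ^ (α - 2) ≤ Δ * w ^ (α - 2) := by
      have := intervalIntegral.integral_mono_on (by linarith : w ≤ w + Δ) hci
        intervalIntegrable_const
        (fun z hz => Real.rpow_le_rpow_of_nonpos hw hz.1 (by linarith))
      simpa using this
    rw [hint, div_le_iff_of_neg (by linarith : α - 1 < 0)] at hmono
    nlinarith [hmono]
  -- the constants
  set A := M / (α * Real.Gamma α) with hAdef
  have hA0 : 0 ≤ A := div_nonneg hM0 (mul_pos hα0 hΓ).le
  set B := C₁ * (1 - α) * T ^ (2*α - 1) / ((2*α - 1) * Real.Gamma α)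
      + C₁ * T ^ (2*α - 1) / (α * Real.Gamma α) with hBdef
  have hTpow : (0:ℝ) ≤ T ^ (2*α-1) := Real.rpow_nonneg hT.le _
  have hB0 : 0 ≤ B := by
    apply add_nonneg
    · exact div_nonneg (mul_nonneg (mul_nonneg hC₁0 (by linarith)) hTpow)
        (mul_pos (by linarith : (0:ℝ) < 2*α-1) hΓ).le
    · exact div_nonneg (mul_nonneg hC₁0 hTpow) (mul_pos hα0 hΓ).le
  -- helper for smul-const integrability
  have hsmulc : ∀ (a c : ℝ), a ≤ c → ∀ g : ℝ → ℝ, IntervalIntegrable g volume a c →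
      ∀ v : EuclideanSpace ℝ (Fin d), IntervalIntegrable (fun u => g u • v) volume a c := by
    intro a c hac g hg v
    rw [intervalIntegrable_iff_integrableOn_Ioc_of_le hac] at hg ⊢
    exact hg.smul_const v
  -- the central estimate
  have hC : ∀ s t : ℝ, 0 ≤ s → s ≤ t → t ≤ T →
      ‖x t - x s‖ ≤ A * (t ^ α - s ^ α) + B * (t - s) := by
    intro s t hs hst htT
    rcases eq_or_lt_of_le hst with rfl | hstlt
    · simp
    have hΔ : 0 < t - s := by linarith
    have h1 := hKfi 0 s t le_rfl hs (by linarith) htT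
    have h3 := hKfi 0 s s le_rfl hs le_rfl (by linarith)
    have h2 := hKfi s t t hs hst le_rfl htT
    have hK1 : IntervalIntegrable (fun u => Kker α (t - u)) volume 0 s :=
      intervalIntegrable_Kker_sub hα0 hα1 hs (by linarith)
    have hK2 : IntervalIntegrable (fun u => Kker α (s - u)) volume 0 s :=
      intervalIntegrable_Kker_sub hα0 hα1 hs le_rfl
    have hK3 : IntervalIntegrable (fun u => Kker α (t - u)) volume s t :=
      intervalIntegrable_Kker_sub hα0 hα1 hst le_rfl
    have hz : (0:ℝ) ^ α = 0 := Real.zero_rpow hα0.ne'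
    -- decomposition of the two integrals
    have ha' : IntervalIntegrable (fun u => (Kker α (t-u) - Kker α (s-u)) • f u) volume 0 s := by
      simpa [sub_smul] using h1.sub h3
    have hb' : IntervalIntegrable (fun u => (Kker α (t-u) - Kker α (s-u)) • f s) volume 0 s :=
      hsmulc 0 s hs _ (hK1.sub hK2) (f s)
    have e1 : ∫ u in (0:ℝ)..s, (Kker α (t - u) - Kker α (s - u)) • f u
        = (∫ u in (0:ℝ)..s, (Kker α (t - u) - Kker α (s - u)) • (f u - f s))
          + (∫ u in (0:ℝ)..s, (Kker α (t - u) - Kker α (s - u))) • f s := by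
      rw [← intervalIntegral.integral_smul_const,
        ← intervalIntegral.integral_add (by simpa [smul_sub] using ha'.sub hb') hb']
      congr 1
      funext u
      rw [smul_sub]
      abel
    have hc' : IntervalIntegrable (fun u => Kker α (t-u) • f s) volume s t :=
      hsmulc s t hst _ hK3 (f s)
    have e2 : ∫ u in s..t, Kker α (t - u) • f u
        = (∫ u in s..t, Kker α (t - u) • (f u - f s))
          + (∫ u in s..t, Kker α (t - u)) • f s := by
      rw [← intervalIntegral.integral_smul_const,
        ← intervalIntegral.integral_add (by simpa [smul_sub] using h2.sub hc') hc']
      congr 1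
      funext u
      rw [smul_sub]
      abel
    have v1 : ∫ u in (0:ℝ)..s, (Kker α (t - u) - Kker α (s - u))
        = ((t^α - (t-s)^α) - s^α) / (α * Real.Gamma α) := by
      rw [intervalIntegral.integral_sub hK1 hK2, integral_Kker_sub hα0 hα1 hs (by linarith),
        integral_Kker_sub hα0 hα1 hs le_rfl]
      simp only [sub_zero, sub_self, hz]
      ring
    have v2 : ∫ u in s..t, Kker α (t - u) = (t-s)^α / (α * Real.Gamma α) := by
      rw [integral_Kker_sub hα0 hα1 hst le_rfl]
      simp only [sub_self, hz, sub_zero]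
    have hdecomp : x t - x s
        = (∫ u in (0:ℝ)..s, (Kker α (t - u) - Kker α (s - u)) • (f u - f s))
          + (∫ u in s..t, Kker α (t - u) • (f u - f s))
          + ((t^α - s^α) / (α * Real.Gamma α)) • f s := by
      rw [hsplit s t hs hst htT, e1, e2, v1, v2]
      have hco : (((t^α - (t-s)^α) - s^α) / (α * Real.Gamma α)) • f s
          + ((t-s)^α / (α * Real.Gamma α)) • f s
          = ((t^α - s^α) / (α * Real.Gamma α)) • f s := by
        rw [← add_smul]
        congr 1
        ring
      rw [← hco]
      abel
    -- bound for the first term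
    have hT1 : ‖∫ u in (0:ℝ)..s, (Kker α (t - u) - Kker α (s - u)) • (f u - f s)‖
        ≤ ∫ u in (0:ℝ)..s, (C₁ * (1-α) * (t-s) / Real.Gamma α) * (s-u)^(2*α-2) := by
      refine norm_intIntegral_le hs ?_ ((II_rpow_sub (by linarith) 0 s s).const_mul _)
      rw [(Measure.restrict_congr_set Ioo_ae_eq_Ioc).symm]
      filter_upwards [ae_restrict_mem measurableSet_Ioo] with u hu
      obtain ⟨hu0, hus⟩ := hu
      have hsu : (0:ℝ) < s - u := by linarith
      have htu : (0:ℝ) < t - u := by linarith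
      rw [norm_smul, Real.norm_eq_abs]
      have hmon : (t-u) ^ (α-1) / Real.Gamma α ≤ (s-u) ^ (α-1) / Real.Gamma α :=
        (div_le_div_iff_of_pos_right hΓ).mpr
          (Real.rpow_le_rpow_of_nonpos hsu (by linarith) (by linarith))
      have habs : |Kker α (t-u) - Kker α (s-u)| ≤ (1-α)*(t-s)*(s-u)^(α-2) / Real.Gamma α := by
        rw [Kker_of_nonneg hα1 hsu.le, Kker_of_nonneg hα1 htu.le,
          abs_of_nonpos (by linarith), neg_sub, div_sub_div_same]
        refine (div_le_div_iff_of_pos_right hΓ).mpr ?_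
        have hk := hkey (s-u) (t-s) hsu (by linarith)
        have hw : s - u + (t - s) = t - u := by ring
        rw [hw] at hk
        exact hk
      have hfu : ‖f u - f s‖ ≤ C₁ * (s-u)^α := by
        rw [norm_sub_rev]
        exact hfH u s hu0.le hus.le (by linarith)
      have hnn : (0:ℝ) ≤ (1-α)*(t-s)*(s-u)^(α-2) / Real.Gamma α :=
        div_nonneg (mul_nonneg (mul_nonneg (by linarith) hΔ.le)
          (Real.rpow_nonneg hsu.le _)) hΓ.le
      calc |Kker α (t-u) - Kker α (s-u)| * ‖f u - f s‖
          ≤ ((1-α)*(t-s)*(s-u)^(α-2) / Real.Gamma α) * (C₁ * (s-u)^α) :=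
            mul_le_mul habs hfu (norm_nonneg _) hnn
        _ = (C₁ * (1-α) * (t-s) / Real.Gamma α) * ((s-u)^(α-2) * (s-u)^α) := by ring
        _ = (C₁ * (1-α) * (t-s) / Real.Gamma α) * (s-u)^(2*α-2) := by
            rw [← Real.rpow_add hsu]
            have he : α - 2 + α = 2*α-2 := by ring
            rw [he]
    have vT1 : ∫ u in (0:ℝ)..s, (C₁ * (1-α) * (t-s) / Real.Gamma α) * (s-u)^(2*α-2)
        = (C₁ * (1-α) * (t-s) / Real.Gamma α) * (s^(2*α-1) / (2*α-1)) := by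
      rw [intervalIntegral.integral_const_mul, integral_rpow_sub (by linarith : (-1:ℝ) < 2*α-2)]
      have h2 : 2*α-2+1 = 2*α-1 := by ring
      rw [h2]
      rw [sub_zero, sub_self, Real.zero_rpow (by intro h; linarith), sub_zero]
    -- bound for the second term
    have hT3 : ‖∫ u in s..t, Kker α (t - u) • (f u - f s)‖
        ≤ ∫ u in s..t, (C₁ * (t-s)^α) * Kker α (t - u) := by
      refine norm_intIntegral_le hst ?_ (hK3.const_mul _)
      filter_upwards [ae_restrict_mem measurableSet_Ioc] with u hu
      rw [norm_smul, Real.norm_eq_abs, abs_of_nonneg (Kker_nonneg hα0 _)]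
      have hfu : ‖f u - f s‖ ≤ C₁ * (t-s)^α := by
        refine (hfH s u hs hu.1.le (by linarith [hu.2])).trans ?_
        exact mul_le_mul_of_nonneg_left
          (Real.rpow_le_rpow (by linarith [hu.1]) (by linarith [hu.2]) hα0.le) hC₁0
      calc Kker α (t-u) * ‖f u - f s‖
          ≤ Kker α (t-u) * (C₁ * (t-s)^α) :=
            mul_le_mul_of_nonneg_left hfu (Kker_nonneg hα0 _)
        _ = (C₁ * (t-s)^α) * Kker α (t-u) := by ring
    have vT3 : ∫ u in s..t, (C₁ * (t-s)^α) * Kker α (t - u)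
        = (C₁ * (t-s)^α) * ((t-s)^α / (α * Real.Gamma α)) := by
      rw [intervalIntegral.integral_const_mul, v2]
    -- bound for the middle term
    have hts : 0 ≤ t^α - s^α := sub_nonneg.mpr (Real.rpow_le_rpow hs hst hα0.le)
    have hmid : ‖((t^α - s^α) / (α * Real.Gamma α)) • f s‖
        ≤ A * (t^α - s^α) := by
      rw [norm_smul, Real.norm_eq_abs,
        abs_of_nonneg (div_nonneg hts (mul_pos hα0 hΓ).le), hAdef]
      calc (t^α - s^α) / (α * Real.Gamma α) * ‖f s‖
          ≤ (t^α - s^α) / (α * Real.Gamma α) * M :=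
            mul_le_mul_of_nonneg_left (hM s ⟨hs, by linarith⟩)
              (div_nonneg hts (mul_pos hα0 hΓ).le)
        _ = M / (α * Real.Gamma α) * (t^α - s^α) := by ring
    -- combine
    have hsT : s^(2*α-1) ≤ T^(2*α-1) :=
      Real.rpow_le_rpow hs (by linarith) (by linarith)
    have hb1 : (C₁ * (1-α) * (t-s) / Real.Gamma α) * (s^(2*α-1) / (2*α-1))
        ≤ (C₁ * (1-α) * T^(2*α-1) / ((2*α-1) * Real.Gamma α)) * (t-s) := by
      exact alg1 hΓ (by linarith : (0:ℝ) < 2*α-1) (mul_nonneg hC₁0 (by linarith)) hΔ.le hsT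
    have hb2 : (C₁ * (t-s)^α) * ((t-s)^α / (α * Real.Gamma α))
        ≤ (C₁ * T^(2*α-1) / (α * Real.Gamma α)) * (t-s) := by
      have he : (t-s)^α * (t-s)^α = (t-s)^(2*α-1) * (t-s) := by
        rw [← Real.rpow_add hΔ]
        have h2 : α + α = (2*α-1) + 1 := by ring
        rw [h2, Real.rpow_add hΔ, Real.rpow_one]
      have htsT : (t-s)^(2*α-1) ≤ T^(2*α-1) :=
        Real.rpow_le_rpow hΔ.le (by linarith) (by linarith)
      calc (C₁ * (t-s)^α) * ((t-s)^α / (α * Real.Gamma α))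
          = (C₁ / (α * Real.Gamma α)) * ((t-s)^α * (t-s)^α) := by ring
        _ = (C₁ / (α * Real.Gamma α)) * ((t-s)^(2*α-1) * (t-s)) := by rw [he]
        _ = ((C₁ * (t-s)) / (α * Real.Gamma α)) * (t-s)^(2*α-1) := by ring
        _ ≤ ((C₁ * (t-s)) / (α * Real.Gamma α)) * T^(2*α-1) :=
            mul_le_mul_of_nonneg_left htsT
              (div_nonneg (mul_nonneg hC₁0 hΔ.le) (mul_pos hα0 hΓ).le)
        _ = (C₁ * T^(2*α-1) / (α * Real.Gamma α)) * (t-s) := by ring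
    rw [hdecomp]
    calc ‖(∫ u in (0:ℝ)..s, (Kker α (t - u) - Kker α (s - u)) • (f u - f s))
          + (∫ u in s..t, Kker α (t - u) • (f u - f s))
          + ((t^α - s^α) / (α * Real.Gamma α)) • f s‖
        ≤ ‖∫ u in (0:ℝ)..s, (Kker α (t - u) - Kker α (s - u)) • (f u - f s)‖
          + ‖∫ u in s..t, Kker α (t - u) • (f u - f s)‖
          + ‖((t^α - s^α) / (α * Real.Gamma α)) • f s‖ := norm_add₃_le
      _ ≤ (C₁ * (1-α) * (t-s) / Real.Gamma α) * (s^(2*α-1) / (2*α-1))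
          + (C₁ * (t-s)^α) * ((t-s)^α / (α * Real.Gamma α))
          + A * (t^α - s^α) := by
          refine add_le_add (add_le_add ?_ ?_) hmid
          · exact hT1.trans (le_of_eq vT1)
          · exact hT3.trans (le_of_eq vT3)
      _ ≤ A * (t ^ α - s ^ α) + B * (t - s) := by
          rw [hBdef]
          nlinarith [hb1, hb2]
  -- conclude: bounded variation via telescoping
  have hbound : eVariationOn x (Icc 0 T) ≤ ENNReal.ofReal (A * T ^ α + B * T) := by
    rw [eVariationOn]
    apply iSup_le
    rintro ⟨n, u, hu, hus⟩
    have hdist : ∀ i : ℕ, dist (x (u (i+1))) (x (u i))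
        ≤ (A * (u (i+1)) ^ α + B * (u (i+1))) - (A * (u i) ^ α + B * (u i)) := by
      intro i
      rw [dist_eq_norm]
      have h := hC (u i) (u (i+1)) (hus i).1 (hu (Nat.le_succ i)) (hus (i+1)).2
      calc ‖x (u (i+1)) - x (u i)‖
          ≤ A * ((u (i+1)) ^ α - (u i) ^ α) + B * (u (i+1) - u i) := h
        _ = (A * (u (i+1)) ^ α + B * (u (i+1))) - (A * (u i) ^ α + B * (u i)) := by ring
    calc ∑ i ∈ Finset.range n, edist (x (u (i+1))) (x (u i))
        = ENNReal.ofReal (∑ i ∈ Finset.range n, dist (x (u (i+1))) (x (u i))) := by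
          rw [ENNReal.ofReal_sum_of_nonneg (fun i _ => dist_nonneg)]
          exact Finset.sum_congr rfl fun i _ => edist_dist _ _
      _ ≤ ENNReal.ofReal (A * T ^ α + B * T) := by
          apply ENNReal.ofReal_le_ofReal
          calc ∑ i ∈ Finset.range n, dist (x (u (i+1))) (x (u i))
              ≤ ∑ i ∈ Finset.range n,
                  ((A * (u (i+1)) ^ α + B * (u (i+1))) - (A * (u i) ^ α + B * (u i))) :=
                Finset.sum_le_sum fun i _ => hdist i
            _ = (A * (u n) ^ α + B * (u n)) - (A * (u 0) ^ α + B * (u 0)) :=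
                Finset.sum_range_sub (fun i => A * (u i) ^ α + B * (u i)) n
            _ ≤ A * T ^ α + B * T := by
                have h1 : (u n) ^ α ≤ T ^ α := Real.rpow_le_rpow (hus n).1 (hus n).2 hα0.le
                have h2 : 0 ≤ (u 0) ^ α := Real.rpow_nonneg (hus 0).1 _
                have h3 := mul_le_mul_of_nonneg_left h1 hA0
                have h4 := mul_nonneg hA0 h2
                have h5 := mul_nonneg hB0 (hus 0).1
                have h6 := mul_le_mul_of_nonneg_left (hus n).2 hB0
                linarith
  exact ne_top_of_le_ne_top ENNReal.ofReal_ne_top hbound
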